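/- An exact sequence 0 → A → B →^ψ C → 0 is S-pure if and only if for every matrix (r_ij) ∈ Hom_R(R^n, R^k) with Coker(r_ij) ∈ S and all a_1,…,a_n ∈ A, whenever the system of linear equations Σ_{i=1}^k r_ij x_i = a_j (1 ≤ j ≤ n) is solvable in B, it is solvable in A. -/

import Mathlib

open Function LinearMap

universe u

variable {R : Type u}

section Defs
variable [Ring R]

/-- The lifting property defining `S`-purity of an epimorphism `g`. -/
def SPureLift (S : Set (ModuleCat.{u} R)) {B C : Type u} [AddCommGroup B] [Module R B]
    [AddCommGroup C] [Module R C] (g : B →ₗ[R] C) : Prop :=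
  ∀ U ∈ S, ∀ h : U →ₗ[R] C, ∃ h' : U →ₗ[R] B, g ∘ₗ h' = h

/-- `0 → A → B → C → 0` is an `S`-pure exact sequence. -/
def IsSPureExact (S : Set (ModuleCat.{u} R)) {A B C : Type u} [AddCommGroup A] [Module R A]
    [AddCommGroup B] [Module R B] [AddCommGroup C] [Module R C]
    (f : A →ₗ[R] B) (g : B →ₗ[R] C) : Prop :=
  Function.Injective f ∧ Function.Surjective g ∧ Function.Exact f g ∧ SPureLift S g

/-- `E` is `S`-pure injective. -/
def IsSPureInjective (S : Set (ModuleCat.{u} R)) (E : Type u) [AddCommGroup E]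
    [Module R E] : Prop :=
  ∀ ⦃A B C : Type u⦄ [AddCommGroup A] [Module R A] [AddCommGroup B] [Module R B]
    [AddCommGroup C] [Module R C] (f : A →ₗ[R] B) (g : B →ₗ[R] C),
    IsSPureExact S f g → ∀ h : A →ₗ[R] E, ∃ h' : B →ₗ[R] E, h' ∘ₗ f = h

/-- `P` is `S`-pure projective. -/
def IsSPureProjective (S : Set (ModuleCat.{u} R)) (P : Type u) [AddCommGroup P]
    [Module R P] : Prop :=
  ∀ ⦃A B C : Type u⦄ [AddCommGroup A] [Module R A] [AddCommGroup B] [Module R B]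
    [AddCommGroup C] [Module R C] (f : A →ₗ[R] B) (g : B →ₗ[R] C),
    IsSPureExact S f g → ∀ h : P →ₗ[R] C, ∃ h' : P →ₗ[R] B, g ∘ₗ h' = h

/-- `N` is an `S`-pure submodule of `M`. -/
def IsSPureSubmodule (S : Set (ModuleCat.{u} R)) {M : Type u} [AddCommGroup M] [Module R M]
    (N : Submodule R M) : Prop :=
  SPureLift S N.mkQ

/-- `φ` is an `S`-pure monomorphism. -/
def IsSPureMono (S : Set (ModuleCat.{u} R)) {M E : Type u} [AddCommGroup M] [Module R M]
    [AddCommGroup E] [Module R E] (φ : M →ₗ[R] E) : Prop :=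
  Function.Injective φ ∧ IsSPureSubmodule S (LinearMap.range φ)

/-- `M` is an `S`-pure essential extension of its submodule `N`. -/
def IsSPureEssentialExtension (S : Set (ModuleCat.{u} R)) {M : Type u} [AddCommGroup M]
    [Module R M] (N : Submodule R M) : Prop :=
  IsSPureSubmodule S N ∧
    ∀ ⦃L : Type u⦄ [AddCommGroup L] [Module R L] (φ : M →ₗ[R] L),
      IsSPureMono S (φ ∘ₗ N.subtype) → Function.Injective φ

/-- `M` is a maximal `S`-pure essential extension of its submodule `N` : `M` is an
`S`-pure essential extension of `N` and no proper extension of `M` is an `S`-pure essential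
extension of (the image of) `N`. -/
def IsMaxSPureEssentialExtension (S : Set (ModuleCat.{u} R)) {M : Type u} [AddCommGroup M]
    [Module R M] (N : Submodule R M) : Prop :=
  IsSPureEssentialExtension S N ∧
    ∀ ⦃L : Type u⦄ [AddCommGroup L] [Module R L] (ι : M →ₗ[R] L), Function.Injective ι →
      IsSPureEssentialExtension S (LinearMap.range (ι ∘ₗ N.subtype)) → Function.Surjective ι

end Defs


lemma sum_single_eq [Ring R] {k : ℕ} (v : Fin k → R) :
    (∑ i, v i • (Pi.single i (1 : R) : Fin k → R)) = v := by
  funext l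
  simp [Finset.sum_apply, Pi.single_apply]

/-- an exact sequence `0 → A → B →ψ C → 0` is `S`-pure iff every system of
linear equations `∑ i, r j i • x i = a j` with matrix having cokernel in `S` and constants
in `A` which is solvable in `B` is solvable in `A`. -/
theorem stmt7 [Ring R] (S : Set (ModuleCat.{u} R))
    (hfp : ∀ U ∈ S, Module.FinitePresentation R U)
    {B C : Type u} [AddCommGroup B] [Module R B] [AddCommGroup C] [Module R C]
    (A : Submodule R B) (ψ : B →ₗ[R] C) (hψ : Function.Surjective ψ)
    (hker : LinearMap.ker ψ = A) :
    SPureLift S ψ ↔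
      ∀ (k n : ℕ) (r : Fin n → Fin k → R),
        (∃ U ∈ S,
          Nonempty (((Fin k → R) ⧸ Submodule.span R (Set.range r)) ≃ₗ[R] U)) →
        ∀ a : Fin n → B, (∀ j, a j ∈ A) →
          (∃ x : Fin k → B, ∀ j, (∑ i, r j i • x i) = a j) →
          ∃ x : Fin k → B, (∀ i, x i ∈ A) ∧ ∀ j, (∑ i, r j i • x i) = a j := by
  constructor
  · rintro hlift k n r ⟨U, hU, ⟨e⟩⟩ a ha ⟨x, hx⟩
    set p : Submodule R (Fin k → R) := Submodule.span R (Set.range r) with hp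
    -- φ : (Fin k → R) → C sending v to ∑ v i • ψ (x i)
    set φ : (Fin k → R) →ₗ[R] C := Fintype.linearCombination R (fun i => ψ (x i)) with hφ
    have hpker : p ≤ LinearMap.ker φ := by
      rw [Submodule.span_le]
      rintro _ ⟨j, rfl⟩
      have : φ (r j) = ψ (a j) := by
        simp [hφ, Fintype.linearCombination_apply, ← hx j, map_sum]
      have haj : ψ (a j) = 0 := by
        have := ha j; rw [← hker] at this; exact this
      simp [LinearMap.mem_ker, this, haj]
    -- the induced map on the quotient, transported through e
    have hlift' := hlift U hU ((Submodule.liftQ p φ hpker) ∘ₗ e.symm.toLinearMap)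
    obtain ⟨h', hh'⟩ := hlift'
    set ℓ : ((Fin k → R) ⧸ p) →ₗ[R] B := h' ∘ₗ e.toLinearMap with hℓ
    have hψℓ : ∀ q, ψ (ℓ q) = Submodule.liftQ p φ hpker q := by
      intro q
      have := LinearMap.congr_fun hh' (e q)
      simpa [hℓ] using this
    set y : Fin k → B := fun i => ℓ (Submodule.mkQ p (Pi.single i 1)) with hy
    have hψy : ∀ i, ψ (y i) = ψ (x i) := by
      intro i
      rw [hy, hψℓ, Submodule.mkQ_apply, Submodule.liftQ_apply, hφ,
        Fintype.linearCombination_apply_single, one_smul]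
    refine ⟨fun i => x i - y i, fun i => ?_, fun j => ?_⟩
    · rw [← hker, LinearMap.mem_ker, map_sub, hψy, sub_self]
    · have hry : (∑ i, r j i • y i) = 0 := by
        have : (∑ i, r j i • y i)
            = ℓ (Submodule.mkQ p (∑ i, r j i • (Pi.single i 1 : Fin k → R))) := by
          simp [hy, map_sum, map_smul]
        rw [this, sum_single_eq]
        have : Submodule.mkQ p (r j) = 0 := by
          rw [Submodule.mkQ_apply, Submodule.Quotient.mk_eq_zero]
          exact Submodule.subset_span ⟨j, rfl⟩
        rw [this, map_zero]
      simp only [smul_sub, Finset.sum_sub_distrib, hx j, hry, sub_zero]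
  · rintro H U hU h
    haveI := hfp U hU
    obtain ⟨k, s, hs⟩ := Module.Finite.exists_fin (R := R) (M := U)
    set π : (Fin k → R) →ₗ[R] U := Fintype.linearCombination R s with hπdef
    have hπ : Function.Surjective π := by
      rw [← LinearMap.range_eq_top, hπdef, Fintype.range_linearCombination, hs]
    have hfgker : (LinearMap.ker π).FG :=
      Module.FinitePresentation.fg_ker π hπ
    obtain ⟨n, r, hr⟩ := Submodule.fg_iff_exists_fin_generating_family.mp hfgker
    -- the quotient equiv
    have hle : Submodule.span R (Set.range r) ≤ LinearMap.ker π := le_of_eq hr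
    set q : ((Fin k → R) ⧸ Submodule.span R (Set.range r)) →ₗ[R] U :=
      Submodule.liftQ _ π hle with hq
    have hqsurj : Function.Surjective q := by
      intro u
      obtain ⟨v, rfl⟩ := hπ u
      exact ⟨Submodule.mkQ _ v, by simp [hq]⟩
    have hqinj : Function.Injective q := by
      rw [← LinearMap.ker_eq_bot, hq, Submodule.ker_liftQ_eq_bot _ _ _ (le_of_eq hr.symm)]
    set e : ((Fin k → R) ⧸ Submodule.span R (Set.range r)) ≃ₗ[R] U :=
      LinearEquiv.ofBijective q ⟨hqinj, hqsurj⟩ with he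
    -- choose preimages
    choose x hxs using fun i => hψ (h (s i))
    set a : Fin n → B := fun j => ∑ i, r j i • x i with haa
    have haA : ∀ j, a j ∈ A := by
      intro j
      rw [← hker, LinearMap.mem_ker, haa, map_sum]
      have hrj : π (r j) = 0 := by
        have : r j ∈ LinearMap.ker π := hr ▸ Submodule.subset_span ⟨j, rfl⟩
        exact this
      calc (∑ i, ψ (r j i • x i)) = ∑ i, r j i • h (s i) := by
            simp [map_smul, hxs]
        _ = h (π (r j)) := by
            simp [hπdef, Fintype.linearCombination_apply, map_sum, map_smul]
        _ = 0 := by rw [hrj, map_zero]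
    obtain ⟨x', hx'A, hx'⟩ := H k n r ⟨U, hU, ⟨e⟩⟩ a haA ⟨x, fun j => rfl⟩
    -- build the lift
    set y : Fin k → B := fun i => x i - x' i with hyy
    set g0 : (Fin k → R) →ₗ[R] B := Fintype.linearCombination R y with hg0
    have hg0le : LinearMap.ker π ≤ LinearMap.ker g0 := by
      rw [← hr, Submodule.span_le]
      rintro _ ⟨j, rfl⟩
      simp only [SetLike.mem_coe, LinearMap.mem_ker, hg0, Fintype.linearCombination_apply,
        hyy, smul_sub, Finset.sum_sub_distrib, hx' j, haa, sub_self]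
    refine ⟨(Submodule.liftQ _ g0 (hr ▸ hg0le)) ∘ₗ (e.symm.toLinearMap), ?_⟩
    apply LinearMap.ext
    intro u
    obtain ⟨v, rfl⟩ := hπ u
    have hesymm : e.symm (π v) = Submodule.mkQ _ v := by
      apply e.injective
      simp [he, hq]
    have hψyi : ∀ i, ψ (y i) = h (s i) := by
      intro i
      have : x' i ∈ LinearMap.ker ψ := hker ▸ hx'A i
      rw [hyy]
      simp only [map_sub, hxs i, LinearMap.mem_ker.mp this, sub_zero]
    simp only [LinearMap.comp_apply, LinearEquiv.coe_toLinearMap, hesymm]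
    rw [Submodule.mkQ_apply, Submodule.liftQ_apply]
    simp [hg0, hπdef, Fintype.linearCombination_apply, map_sum, map_smul, hψyi]
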